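/- Suppose n ≥ k − 1. Let Ω = Ω(V,M) and Ω′ = Ω(V′,M′) be reduced Pauli monomials, i.e. the columns of V ∈ F₂^{k×m} (resp. V′ ∈ F₂^{k×m′}) each have even Hamming weight and are linearly independent over F₂ (rank V = m, rank V′ = m′), with 0 ≤ m, m′ ≤ k − 1, and M ∈ F₂^{m×m}, M′ ∈ F₂^{m′×m′} symmetric with zero diagonal. Then tr(Ω†Ω′) = d^k if and only if Ω = Ω′ as operators on (ℂ^d)^{⊗k}. -/

import Mathlib

open Matrix
open scoped Classical

noncomputable section

/-- The four 2×2 Pauli matrices: `0 ↦ I`, `1 ↦ X`, `2 ↦ Y`, `3 ↦ Z`. -/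
def pauli1 : Fin 4 → Matrix (Fin 2) (Fin 2) ℂ
  | 0 => !![1, 0; 0, 1]
  | 1 => !![0, 1; 1, 0]
  | 2 => !![0, -Complex.I; Complex.I, 0]
  | 3 => !![1, 0; 0, -1]

/-- The `n`-qubit Pauli operator associated to the string `s : Fin n → Fin 4`. -/
def PauliOp (n : ℕ) (s : Fin n → Fin 4) :
    Matrix (Fin n → Fin 2) (Fin n → Fin 2) ℂ :=
  Matrix.of fun i j => ∏ a, pauli1 (s a) (i a) (j a)

/-- `χ(A,B) := tr(ABAB)/d` with `d = 2^n`. -/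
def chi (n : ℕ) (A B : Matrix (Fin n → Fin 2) (Fin n → Fin 2) ℂ) : ℂ :=
  Matrix.trace (A * B * A * B) / (2 ^ n : ℂ)


set_option maxHeartbeats 1000000

def add4 (a b : Fin 4) : Fin 4 := ⟨a.val ^^^ b.val, Nat.xor_lt_two_pow (n := 2) a.isLt b.isLt⟩

def ph : Fin 4 → Fin 4 → ℂ := fun a b =>
  match a, b with
  | 1,2 => Complex.I | 2,3 => Complex.I | 3,1 => Complex.I
  | 2,1 => -Complex.I | 3,2 => -Complex.I | 1,3 => -Complex.I
  | _,_ => 1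

lemma pauli1_zero : pauli1 0 = 1 := by
  ext i j; fin_cases i <;> fin_cases j <;> simp [pauli1]

lemma pauli1_mul (a b : Fin 4) : pauli1 a * pauli1 b = ph a b • pauli1 (add4 a b) := by
  fin_cases a <;> fin_cases b <;>
    · ext i j
      fin_cases i <;> fin_cases j <;>
        simp [pauli1, ph, add4, Matrix.mul_apply, Fin.sum_univ_two, Complex.I_mul_I] <;> ring

lemma pauli1_conjT (a : Fin 4) : (pauli1 a)ᴴ = pauli1 a := by
  fin_cases a <;>
    · ext i j
      fin_cases i <;> fin_cases j <;> simp [pauli1, Matrix.conjTranspose_apply]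

lemma pauli1_unitary (a : Fin 4) : (pauli1 a)ᴴ * pauli1 a = 1 := by
  rw [pauli1_conjT, pauli1_mul]
  have h1 : add4 a a = 0 := by fin_cases a <;> rfl
  have h2 : ph a a = 1 := by fin_cases a <;> rfl
  rw [h1, h2, pauli1_zero, one_smul]

lemma pauli1_trace (a : Fin 4) (h : a ≠ 0) : Matrix.trace (pauli1 a) = 0 := by
  fin_cases a
  · exact absurd rfl h
  all_goals simp [pauli1, Matrix.trace, Matrix.diag, Fin.sum_univ_two]

def enc : Fin 4 → ZMod 2 × ZMod 2
  | 0 => (0, 0) | 1 => (0, 1) | 2 => (1, 0) | 3 => (1, 1)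

lemma enc_add (a b : Fin 4) : enc (add4 a b) = enc a + enc b := by fin_cases a <;> fin_cases b <;> rfl
lemma enc_zero_iff (a : Fin 4) : enc a = 0 ↔ a = 0 := by fin_cases a <;> simp [enc] <;> decide

-- product of a list of paulis is a scalar multiple of the pauli of the xor-sum
lemma pauli_list_prod (L : List (Fin 4)) :
    ∃ c : ℂ, (L.map pauli1).prod = c • pauli1 (L.foldr add4 0) := by
  induction L with
  | nil => exact ⟨1, by simp [pauli1_zero]⟩
  | cons a L ih =>
    obtain ⟨c, hc⟩ := ih
    refine ⟨ph a (L.foldr add4 0) * c, ?_⟩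
    simp only [List.map_cons, List.prod_cons, hc, List.foldr_cons, Matrix.mul_smul,
      pauli1_mul, smul_smul]
    ring_nf

lemma enc_foldr (L : List (Fin 4)) : enc (L.foldr add4 0) = (L.map enc).sum := by
  induction L with
  | nil => rfl
  | cons a L ih => simp [enc_add, ih]

lemma pauli_list_trace_zero (L : List (Fin 4)) (h : (L.map enc).sum ≠ 0) :
    Matrix.trace (L.map pauli1).prod = 0 := by
  obtain ⟨c, hc⟩ := pauli_list_prod L
  rw [hc, Matrix.trace_smul, pauli1_trace, smul_zero]
  intro h0
  exact h (by rw [← enc_foldr, h0]; rfl)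

lemma pauli_listT_prod (L : List (Fin 4)) :
    ((L.map pauli1).prod)ᴴ = (L.reverse.map pauli1).prod := by
  induction L with
  | nil => simp
  | cons a L ih =>
    simp [Matrix.conjTranspose_mul, ih, pauli1_conjT]

lemma pauli_list_unitary (L : List (Fin 4)) :
    ((L.map pauli1).prod)ᴴ * (L.map pauli1).prod = 1 := by
  induction L with
  | nil => simp
  | cons a L ih =>
    simp only [List.map_cons, List.prod_cons, Matrix.conjTranspose_mul]
    rw [Matrix.mul_assoc, ← Matrix.mul_assoc (pauli1 a)ᴴ, pauli1_unitary,
      Matrix.one_mul, ih]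

-- generic tensor
def gtens {ι : Type*} [Fintype ι] {X : ι → Type*} [∀ i, Fintype (X i)]
    (g : ∀ i, Matrix (X i) (X i) ℂ) : Matrix (∀ i, X i) (∀ i, X i) ℂ :=
  Matrix.of fun I J => ∏ a, g a (I a) (J a)

set_option linter.unusedSectionVars false
variable {ι : Type*} [Fintype ι] [DecidableEq ι] {X : ι → Type*} [∀ i, Fintype (X i)]
  [∀ i, DecidableEq (X i)]

lemma gtens_mul (g h : ∀ i, Matrix (X i) (X i) ℂ) :
    gtens g * gtens h = gtens (fun i => g i * h i) := by
  ext I J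
  simp only [gtens, Matrix.mul_apply, Matrix.of_apply]
  simp_rw [← Finset.prod_mul_distrib]
  exact (Fintype.prod_sum (fun i t => g i (I i) t * h i t (J i))).symm

lemma gtens_one : gtens (fun i => (1 : Matrix (X i) (X i) ℂ)) = 1 := by
  ext I J
  simp only [gtens, Matrix.of_apply, Matrix.one_apply]
  by_cases h : I = J
  · subst h; simp
  · rw [if_neg h]
    obtain ⟨a, ha⟩ := Function.ne_iff.mp h
    exact Finset.prod_eq_zero (Finset.mem_univ a) (by simp [ha])

lemma gtens_conjTranspose (g : ∀ i, Matrix (X i) (X i) ℂ) :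
    (gtens g)ᴴ = gtens (fun i => (g i)ᴴ) := by
  ext I J
  simp [gtens, Matrix.conjTranspose_apply, map_prod]

lemma gtens_trace (g : ∀ i, Matrix (X i) (X i) ℂ) :
    Matrix.trace (gtens g) = ∏ i, Matrix.trace (g i) := by
  simp only [Matrix.trace, Matrix.diag, gtens, Matrix.of_apply]
  rw [Fintype.prod_sum (fun i t => g i t t)]

lemma gtens_list_prod (L : List (∀ i, Matrix (X i) (X i) ℂ)) :
    (L.map gtens).prod = gtens (fun i => (L.map (fun g => g i)).prod) := by
  induction L with
  | nil => simp [gtens_one]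
  | cons a L ih => simp [ih, gtens_mul]

lemma PauliOp_eq_gtens (n : ℕ) (s : Fin n → Fin 4) :
    PauliOp n s = gtens (fun b => pauli1 (s b)) := rfl

def pm (x : ℂ) : Prop := x = 1 ∨ x = -1

lemma pm_one : pm 1 := Or.inl rfl
lemma pm_mul {x y : ℂ} (hx : pm x) (hy : pm y) : pm (x * y) := by
  rcases hx with h | h <;> rcases hy with h' | h' <;> subst h <;> subst h' <;>
    simp [pm] <;> norm_num
lemma pm_pow {x : ℂ} (hx : pm x) (r : ℕ) : pm (x ^ r) := by
  induction r with
  | zero => simpa using pm_one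
  | succ r ih => rw [pow_succ]; exact pm_mul ih hx
lemma pm_prod {α : Type*} (s : Finset α) (f : α → ℂ) (h : ∀ a ∈ s, pm (f a)) :
    pm (∏ a ∈ s, f a) := by
  classical
  induction s using Finset.induction with
  | empty => simpa using pm_one
  | insert _ _ hnot ih =>
    rw [Finset.prod_insert hnot]
    exact pm_mul (h _ (Finset.mem_insert_self _ _))
      (ih fun a ha => h a (Finset.mem_insert_of_mem ha))
lemma pm_star_mul_self {x : ℂ} (hx : pm x) : (starRingEnd ℂ) x * x = 1 := by
  rcases hx with h | h <;> subst h <;> simp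

lemma pauli1_abab (a b : Fin 4) :
    pauli1 a * pauli1 b * pauli1 a * pauli1 b = (ph a b) ^ 2 • 1 := by
  have h := pauli1_mul a b
  have h2 : pauli1 (add4 a b) * pauli1 (add4 a b) = 1 := by
    rw [pauli1_mul]
    have h1 : add4 (add4 a b) (add4 a b) = 0 := by fin_cases a <;> fin_cases b <;> rfl
    have h0 : ph (add4 a b) (add4 a b) = 1 := by fin_cases a <;> fin_cases b <;> rfl
    rw [h1, h0, pauli1_zero, one_smul]
  calc pauli1 a * pauli1 b * pauli1 a * pauli1 b
      = (pauli1 a * pauli1 b) * (pauli1 a * pauli1 b) := mul_assoc _ _ _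
    _ = (ph a b • pauli1 (add4 a b)) * (ph a b • pauli1 (add4 a b)) := by rw [h]
    _ = (ph a b) ^ 2 • (pauli1 (add4 a b) * pauli1 (add4 a b)) := by
        rw [Matrix.smul_mul, Matrix.mul_smul, smul_smul, sq]
    _ = (ph a b) ^ 2 • 1 := by rw [h2]

lemma ph_sq_pm (a b : Fin 4) : pm ((ph a b) ^ 2) := by
  fin_cases a <;> fin_cases b <;> simp [ph, pm] <;> norm_num [Complex.I_sq]

lemma chi_eval (n : ℕ) (s t : Fin n → Fin 4) :
    chi n (PauliOp n s) (PauliOp n t) = ∏ b, (ph (s b) (t b)) ^ 2 := by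
  rw [chi, PauliOp_eq_gtens, PauliOp_eq_gtens, gtens_mul, gtens_mul, gtens_mul, gtens_trace]
  have : ∀ b : Fin n, Matrix.trace
      (pauli1 (s b) * pauli1 (t b) * pauli1 (s b) * pauli1 (t b)) = (ph (s b) (t b))^2 * 2 := by
    intro b
    rw [pauli1_abab, Matrix.trace_smul, Matrix.trace_one]
    simp [smul_eq_mul]
  simp only [this]
  rw [Finset.prod_mul_distrib, Finset.prod_const]
  simp [mul_div_assoc]

lemma chi_pm (n : ℕ) (s t : Fin n → Fin 4) : pm (chi n (PauliOp n s) (PauliOp n t)) := by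
  rw [chi_eval]
  exact pm_prod _ _ fun b _ => ph_sq_pm (s b) (t b)

/-- `P^{⊗v}` for `v ∈ F₂^k`: the operator on `(ℂ^{2^n})^{⊗k}` acting as `P` on the
tensor factors where `v` is `1` and as the identity elsewhere. -/
def tensorPow (n k : ℕ) (P : Matrix (Fin n → Fin 2) (Fin n → Fin 2) ℂ)
    (v : Fin k → ZMod 2) :
    Matrix (Fin k → Fin n → Fin 2) (Fin k → Fin n → Fin 2) ℂ :=
  Matrix.of fun I J =>
    ∏ a, (if v a = 1 then P (I a) (J a) else if I a = J a then 1 else 0)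

/-- The Pauli monomial `Ω(V,M)` on `k` copies of `n` qubits:
`Ω(V,M) = d^{-m} ∑_{(P₁,…,P_m)} (∏_{i<j} χ(P_i,P_j)^{M_{ij}}) P₁^{⊗v₁} ⋯ P_m^{⊗v_m}`,
where `v₁,…,v_m` are the columns of `V`. -/
def pauliMonomial (n k m : ℕ) (V : Fin k → Fin m → ZMod 2)
    (M : Fin m → Fin m → ZMod 2) :
    Matrix (Fin k → Fin n → Fin 2) (Fin k → Fin n → Fin 2) ℂ :=
  (((2 : ℂ) ^ n) ^ m)⁻¹ •
    ∑ P : Fin m → (Fin n → Fin 4),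
      (∏ q ∈ Finset.univ.filter (fun q : Fin m × Fin m => q.1 < q.2),
          chi n (PauliOp n (P q.1)) (PauliOp n (P q.2)) ^ (M q.1 q.2).val) •
        (List.ofFn fun i : Fin m =>
          tensorPow n k (PauliOp n (P i)) (fun a => V a i)).prod

/-- the single-qubit Pauli string at copy `a`, qubit `b`, slot `i`. -/
def qstr {n k m : ℕ} (V : Fin k → Fin m → ZMod 2) (P : Fin m → Fin n → Fin 4)
    (a : Fin k) (b : Fin n) : List (Fin 4) :=
  List.ofFn fun i => if V a i = 1 then P i b else 0

/-- the 2×2 matrix at copy `a`, qubit `b`. -/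
def Wmat {n k m : ℕ} (V : Fin k → Fin m → ZMod 2) (P : Fin m → Fin n → Fin 4)
    (a : Fin k) (b : Fin n) : Matrix (Fin 2) (Fin 2) ℂ :=
  ((qstr V P a b).map pauli1).prod

lemma tensorPow_eq_gtens (n k : ℕ) (P : Matrix (Fin n → Fin 2) (Fin n → Fin 2) ℂ)
    (v : Fin k → ZMod 2) :
    tensorPow n k P v = gtens (fun a => if v a = 1 then P else 1) := by
  ext I J
  simp only [tensorPow, gtens, Matrix.of_apply]
  refine Finset.prod_congr rfl fun a _ => ?_
  by_cases h : v a = 1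
  · simp [h]
  · simp [h, Matrix.one_apply]

lemma T_eq_gtens (n k m : ℕ) (V : Fin k → Fin m → ZMod 2)
    (P : Fin m → Fin n → Fin 4) :
    (List.ofFn fun i : Fin m =>
        tensorPow n k (PauliOp n (P i)) (fun a => V a i)).prod =
      gtens (fun a : Fin k => gtens (fun b : Fin n => Wmat V P a b)) := by
  have step1 : (List.ofFn fun i : Fin m =>
      tensorPow n k (PauliOp n (P i)) (fun a => V a i)) =
      (List.ofFn fun i : Fin m =>
        (fun a : Fin k => if V a i = 1 then PauliOp n (P i) else 1)).map gtens := by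
    rw [List.map_ofFn]
    exact congrArg List.ofFn (funext fun i => tensorPow_eq_gtens n k _ _)
  rw [step1, gtens_list_prod]
  refine congrArg gtens (funext fun a => ?_)
  have step2 : (List.ofFn fun i : Fin m =>
      (fun a : Fin k => if V a i = 1 then PauliOp n (P i) else 1)).map (fun g => g a) =
      (List.ofFn fun i : Fin m =>
        (fun b : Fin n => if V a i = 1 then pauli1 (P i b) else 1)).map gtens := by
    rw [List.map_ofFn, List.map_ofFn]
    refine congrArg List.ofFn (funext fun i => ?_)
    show (if V a i = 1 then PauliOp n (P i) else 1) = _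
    split_ifs with h
    · rw [PauliOp_eq_gtens]; exact congrArg gtens (funext fun b => by simp [h])
    · rw [← gtens_one]; exact congrArg gtens (funext fun b => by simp [h])
  rw [step2, gtens_list_prod]
  refine congrArg gtens (funext fun b => ?_)
  rw [List.map_ofFn]
  show (List.ofFn fun i => if V a i = 1 then pauli1 (P i b) else 1).prod = Wmat V P a b
  rw [Wmat, qstr, List.map_ofFn]
  congr 1
  exact congrArg List.ofFn (funext fun i => by
    show (if V a i = 1 then pauli1 (P i b) else 1) = pauli1 (if V a i = 1 then P i b else 0)
    split_ifs <;> simp [pauli1_zero])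

lemma trace_T_mul (n k m : ℕ) (V : Fin k → Fin m → ZMod 2)
    (P Q : Fin m → Fin n → Fin 4) :
    Matrix.trace (((List.ofFn fun i : Fin m =>
        tensorPow n k (PauliOp n (P i)) (fun a => V a i)).prod)ᴴ *
      (List.ofFn fun i : Fin m =>
        tensorPow n k (PauliOp n (Q i)) (fun a => V a i)).prod) =
      ∏ a : Fin k, ∏ b : Fin n,
        Matrix.trace ((Wmat V P a b)ᴴ * Wmat V Q a b) := by
  rw [T_eq_gtens, T_eq_gtens, gtens_conjTranspose, gtens_mul, gtens_trace]
  refine Finset.prod_congr rfl fun a _ => ?_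
  rw [gtens_conjTranspose, gtens_mul, gtens_trace]

lemma trace_two : Matrix.trace (1 : Matrix (Fin 2) (Fin 2) ℂ) = 2 := by
  simp [Matrix.trace_one]

lemma Wmat_diag {n k m : ℕ} (V : Fin k → Fin m → ZMod 2) (P : Fin m → Fin n → Fin 4)
    (a : Fin k) (b : Fin n) :
    Matrix.trace ((Wmat V P a b)ᴴ * Wmat V P a b) = 2 := by
  rw [Wmat, pauli_list_unitary, trace_two]

lemma enc_inj_add {x y : Fin 4} (h : enc x + enc y = 0) : x = y := by
  fin_cases x <;> fin_cases y <;> first | rfl | (exfalso; revert h; simp [enc] <;> decide)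

lemma Wmat_offdiag {n k m : ℕ} (V : Fin k → Fin m → ZMod 2)
    (hVind : LinearIndependent (ZMod 2) (fun i : Fin m => fun a : Fin k => V a i))
    (P Q : Fin m → Fin n → Fin 4) (hPQ : P ≠ Q) :
    ∃ a b, Matrix.trace ((Wmat V P a b)ᴴ * Wmat V Q a b) = 0 := by
  classical
  obtain ⟨i₀, hi₀⟩ := Function.ne_iff.mp hPQ
  obtain ⟨b, hb⟩ := Function.ne_iff.mp hi₀
  set w : Fin m → ZMod 2 × ZMod 2 := fun i => enc (P i b) + enc (Q i b) with hw
  have hw0 : w i₀ ≠ 0 := fun h => hb (enc_inj_add h)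
  obtain ⟨φ, hφ⟩ : ∃ φ : (ZMod 2 × ZMod 2) →+ ZMod 2, φ (w i₀) ≠ 0 := by
    by_cases h1 : (w i₀).1 ≠ 0
    · exact ⟨AddMonoidHom.fst _ _, h1⟩
    · refine ⟨AddMonoidHom.snd _ _, fun h2 => ?_⟩
      push_neg at h1
      exact hw0 (Prod.ext h1 h2)
  set x : Fin m → ZMod 2 := fun i => φ (w i) with hx
  have hxa : ∃ a, ∑ i, x i * V a i ≠ 0 := by
    by_contra hcon
    push_neg at hcon
    have hzero : ∑ i, x i • (fun a : Fin k => V a i) = 0 := by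
      funext a
      rw [Finset.sum_apply]
      simpa using hcon a
    exact hφ (Fintype.linearIndependent_iff.mp hVind x hzero i₀)
  obtain ⟨a, ha⟩ := hxa
  refine ⟨a, b, ?_⟩
  rw [Wmat, Wmat, pauli_listT_prod, ← List.prod_append, ← List.map_append]
  apply pauli_list_trace_zero
  rw [List.map_append, List.sum_append, List.map_reverse, List.sum_reverse]
  intro hS
  apply ha
  have key : ∀ (R : Fin m → Fin n → Fin 4),
      φ (((qstr V R a b).map enc).sum) = ∑ i, (if V a i = 1 then φ (enc (R i b)) else 0) := by
    intro R
    rw [qstr, List.map_ofFn, List.sum_ofFn, map_sum]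
    refine Finset.sum_congr rfl fun i _ => ?_
    show φ (enc (if V a i = 1 then R i b else 0)) = _
    split_ifs with h
    · rfl
    · show φ (enc 0) = 0; simp [enc]; exact map_zero φ
  have hφS := congrArg φ hS
  rw [map_add, map_zero, key, key, ← Finset.sum_add_distrib] at hφS
  rw [← hφS]
  refine Finset.sum_congr rfl fun i _ => ?_
  have hz : V a i = 0 ∨ V a i = 1 := by
    have : ∀ z : ZMod 2, z = 0 ∨ z = 1 := by decide
    exact this _
  rcases hz with h | h
  · simp [h, x, hw]
  · simp [h, x, hw, map_add]

lemma eps_pm (n m : ℕ) (M : Fin m → Fin m → ZMod 2) (P : Fin m → Fin n → Fin 4) :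
    pm (∏ q ∈ Finset.univ.filter (fun q : Fin m × Fin m => q.1 < q.2),
      chi n (PauliOp n (P q.1)) (PauliOp n (P q.2)) ^ (M q.1 q.2).val) :=
  pm_prod _ _ fun q _ => pm_pow (chi_pm n _ _) _

lemma trace_mon_self (n k m : ℕ) (V : Fin k → Fin m → ZMod 2)
    (M : Fin m → Fin m → ZMod 2)
    (hVind : LinearIndependent (ZMod 2) (fun i : Fin m => fun a : Fin k => V a i)) :
    Matrix.trace ((pauliMonomial n k m V M)ᴴ * pauliMonomial n k m V M) =
      ((2 : ℂ) ^ n) ^ k := by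
  classical
  set c : ℂ := (((2 : ℂ) ^ n) ^ m)⁻¹ with hc
  set eps : (Fin m → Fin n → Fin 4) → ℂ := fun P =>
    ∏ q ∈ Finset.univ.filter (fun q : Fin m × Fin m => q.1 < q.2),
      chi n (PauliOp n (P q.1)) (PauliOp n (P q.2)) ^ (M q.1 q.2).val with heps
  set T : (Fin m → Fin n → Fin 4) → Matrix (Fin k → Fin n → Fin 2) (Fin k → Fin n → Fin 2) ℂ :=
    fun P => (List.ofFn fun i : Fin m =>
      tensorPow n k (PauliOp n (P i)) (fun a => V a i)).prod with hT
  have hmon : pauliMonomial n k m V M = c • ∑ P, eps P • T P := rfl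
  have key : ∀ P Q, ((starRingEnd ℂ) (eps P) * eps Q) * Matrix.trace ((T P)ᴴ * T Q) =
      if P = Q then ((2 : ℂ) ^ n) ^ k else 0 := by
    intro P Q
    by_cases hPQ : P = Q
    · subst hPQ
      rw [if_pos rfl, hT, trace_T_mul]
      have : ∀ a : Fin k, ∀ b : Fin n,
          Matrix.trace ((Wmat V P a b)ᴴ * Wmat V P a b) = 2 := Wmat_diag V P
      simp only [this]
      rw [pm_star_mul_self (eps_pm n m M P), one_mul]
      rw [Finset.prod_const, Finset.prod_const]
      simp [Finset.card_univ]
    · rw [if_neg hPQ, hT, trace_T_mul]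
      obtain ⟨a, b, hab⟩ := Wmat_offdiag V hVind P Q hPQ
      rw [Finset.prod_eq_zero (Finset.mem_univ a)
        (Finset.prod_eq_zero (Finset.mem_univ b) hab), mul_zero]
  have expand : Matrix.trace ((pauliMonomial n k m V M)ᴴ * pauliMonomial n k m V M) =
      ((starRingEnd ℂ) c * c) * ∑ P, ∑ Q,
        ((starRingEnd ℂ) (eps P) * eps Q) * Matrix.trace ((T P)ᴴ * T Q) := by
    rw [hmon]
    rw [Matrix.conjTranspose_smul, Matrix.conjTranspose_sum]
    simp only [Matrix.conjTranspose_smul]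
    rw [Matrix.smul_mul, Matrix.mul_smul, Matrix.sum_mul]
    simp only [Matrix.smul_mul, Matrix.mul_sum, Matrix.smul_mul, Matrix.mul_smul]
    rw [Matrix.trace_smul, Matrix.trace_smul, Matrix.trace_sum]
    simp only [Matrix.trace_sum, Matrix.trace_smul, smul_eq_mul, Finset.mul_sum]
    simp only [starRingEnd_apply]
    refine Finset.sum_congr rfl fun P _ => Finset.sum_congr rfl fun Q _ => by ring
  rw [expand]
  simp only [key]
  rw [Finset.sum_congr rfl (fun P _ => Finset.sum_ite_eq (Finset.univ) P
      (fun _ => ((2:ℂ)^n)^k))]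
  simp only [Finset.mem_univ, if_pos]
  rw [Finset.sum_const, Finset.card_univ]
  have hcard : (Fintype.card (Fin m → Fin n → Fin 4) : ℂ) = (((2:ℂ)^n)^m)^2 := by
    simp only [Fintype.card_fun, Fintype.card_fin]
    push_cast
    rw [← pow_mul, ← pow_mul, ← pow_mul, show ((4:ℂ)) = 2^2 by norm_num, ← pow_mul]
    congr 1
    ring
  have hstar : (starRingEnd ℂ) c = c := by
    rw [hc, map_inv₀, map_pow, map_pow, map_ofNat]
  rw [hstar, nsmul_eq_mul, hcard]
  have h2 : ((2:ℂ)^n)^m ≠ 0 := pow_ne_zero _ (pow_ne_zero _ two_ne_zero)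
  field_simp [hc]
  rw [hc, inv_pow, inv_mul_eq_one₀ (by positivity)]

open scoped ComplexOrder in
lemma eq_zero_of_trace_conjTranspose_mul_self {p q : Type*} [Fintype p] [Fintype q]
    [DecidableEq q] (A : Matrix p q ℂ) (h : Matrix.trace (Aᴴ * A) = 0) : A = 0 := by
  classical
  have key : ∀ j, (Aᴴ * A) j j = dotProduct (star (fun i => A i j)) (fun i => A i j) := by
    intro j
    simp [Matrix.mul_apply, Matrix.conjTranspose_apply, dotProduct]
  have nonneg : ∀ j ∈ Finset.univ, 0 ≤ (Aᴴ * A) j j := by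
    intro j _
    rw [key j]
    exact dotProduct_star_self_nonneg _
  have each : ∀ j ∈ Finset.univ, (Aᴴ * A) j j = 0 :=
    (Finset.sum_eq_zero_iff_of_nonneg nonneg).mp (by simpa [Matrix.trace, Matrix.diag] using h)
  ext i j
  have hj := each j (Finset.mem_univ j)
  rw [key j] at hj
  have := dotProduct_star_self_eq_zero.mp hj
  exact congrFun this i


/-- The unitary on `(ℂ^{2^n})^{⊗k}` permuting the `k` tensor factors according to `π`. -/
def permMatrix (n k : ℕ) (π : Equiv.Perm (Fin k)) :
    Matrix (Fin k → Fin n → Fin 2) (Fin k → Fin n → Fin 2) ℂ :=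
  Matrix.of fun I J => if (fun a => I (π a)) = J then 1 else 0

/-- For `n ≥ k−1` and reduced Pauli monomials `Ω = Ω(V,M)`, `Ω′ = Ω(V′,M′)` (columns
of `V`, `V′` of even Hamming weight and linearly independent over `F₂`, with
`m, m′ ≤ k−1`), one has `tr(Ω†Ω′) = d^k` if and only if `Ω = Ω′`. -/
theorem reduced_pauli_monomial_trace_eq_iff (n k : ℕ) (hn : 1 ≤ n) (hk : 1 ≤ k)
    (hkn : k ≤ n + 1) (m m' : ℕ) (hm : m < k) (hm' : m' < k)
    (V : Fin k → Fin m → ZMod 2) (M : Fin m → Fin m → ZMod 2)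
    (V' : Fin k → Fin m' → ZMod 2) (M' : Fin m' → Fin m' → ZMod 2)
    (hV : ∀ i : Fin m, Even (Finset.univ.filter (fun a : Fin k => V a i = 1)).card)
    (hVind : LinearIndependent (ZMod 2) (fun i : Fin m => fun a : Fin k => V a i))
    (hM : ∀ i j, M i j = M j i) (hMd : ∀ i, M i i = 0)
    (hV' : ∀ i : Fin m', Even (Finset.univ.filter (fun a : Fin k => V' a i = 1)).card)
    (hVind' : LinearIndependent (ZMod 2) (fun i : Fin m' => fun a : Fin k => V' a i))
    (hM' : ∀ i j, M' i j = M' j i) (hMd' : ∀ i, M' i i = 0) :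
    Matrix.trace ((pauliMonomial n k m V M)ᴴ * pauliMonomial n k m' V' M') =
        ((2 : ℂ) ^ n) ^ k ↔
      pauliMonomial n k m V M = pauliMonomial n k m' V' M' := by
  have h1 := trace_mon_self n k m V M hVind
  have h2 := trace_mon_self n k m' V' M' hVind'
  set A := pauliMonomial n k m V M with hA
  set B := pauliMonomial n k m' V' M' with hB
  constructor
  · intro h
    have hBA : Matrix.trace (Bᴴ * A) = ((2:ℂ)^n)^k := by
      have hstar : Matrix.trace (Bᴴ * A) = star (Matrix.trace (Aᴴ * B)) := by
        rw [← Matrix.trace_conjTranspose, Matrix.conjTranspose_mul,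
          Matrix.conjTranspose_conjTranspose]
      rw [hstar, h]
      simp only [star_pow]
      norm_num
    have hz : Matrix.trace ((A - B)ᴴ * (A - B)) = 0 := by
      rw [Matrix.conjTranspose_sub, Matrix.sub_mul, Matrix.mul_sub, Matrix.mul_sub,
        Matrix.trace_sub, Matrix.trace_sub, Matrix.trace_sub, h1, h, hBA, h2]
      ring
    have := eq_zero_of_trace_conjTranspose_mul_self _ hz
    rwa [sub_eq_zero] at this
  · intro h
    rw [h]
    exact h2
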